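/- Combined accuracy at a critical point for WENO3-Z_{ES4} weights: Let β_0*(h), β_1*(h) be positive functions with β_k* = A·h⁴ + b_k·h⁵ + O(h⁶) for a common constant A > 0 and possibly distinct constants b_0, b_1, and let τ(h) > 0 with τ = O(h⁵). Let d_0, d_1 > 0, d_0 + d_1 = 1, C_α > 0, and define α_k = d_k(1 + C_α·τ/β_k*), ω_k = α_k/(α_0 + α_1). Then ω_k − d_k = O(h²) for k = 0, 1. -/

import Mathlib

/-- Key algebraic bound: deviation of a normalized weight. -/
lemma weno_key (d0 d1 Cα t B0 B1 : ℝ) (hd0 : 0 < d0) (hd1 : 0 < d1)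
    (hsum : d0 + d1 = 1) (hCα : 0 < Cα) (ht : 0 < t)
    (hB0 : 0 < B0) (hB1 : 0 < B1) :
    |d0 * (1 + Cα * t / B0) / (d0 * (1 + Cα * t / B0) + d1 * (1 + Cα * t / B1)) - d0|
      ≤ d0 * d1 * Cα * t * |B1 - B0| / (B0 * B1) := by
  set x := Cα * t / B0 with hx
  set y := Cα * t / B1 with hy
  have hx0 : 0 ≤ x := by positivity
  have hy0 : 0 ≤ y := by positivity
  set S := d0 * (1 + x) + d1 * (1 + y) with hS
  have hS1 : 1 ≤ S := by
    have : S = 1 + (d0 * x + d1 * y) := by rw [hS]; nlinarith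
    nlinarith [mul_nonneg hd0.le hx0, mul_nonneg hd1.le hy0]
  have hSpos : 0 < S := lt_of_lt_of_le one_pos hS1
  have hid : d0 * (1 + x) / S - d0 = d0 * d1 * (x - y) / S := by
    rw [eq_div_iff hSpos.ne', sub_mul, div_mul_cancel₀ _ hSpos.ne', hS]
    linear_combination (-(d0 * (1 + x))) * hsum
  rw [hid]
  have hxy : x - y = Cα * t * (B1 - B0) / (B0 * B1) := by
    rw [hx, hy]; field_simp
  have habs : |d0 * d1 * (x - y) / S| = d0 * d1 * |x - y| / S := by
    rw [abs_div, abs_mul, abs_mul, abs_of_pos hd0, abs_of_pos hd1, abs_of_pos hSpos]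
  rw [habs]
  have h1 : d0 * d1 * |x - y| / S ≤ d0 * d1 * |x - y| := by
    apply div_le_self (by positivity) hS1
  refine h1.trans ?_
  rw [hxy, abs_div, abs_mul, abs_of_pos (by positivity : (0:ℝ) < Cα * t),
    abs_of_pos (by positivity : (0:ℝ) < B0 * B1)]
  exact le_of_eq (by ring)

lemma weno_aux (d0 d1 Cα Kτ Cβ A h : ℝ) (hA : A ≠ 0) (hh : h ≠ 0) :
    d0 * d1 * Cα * (Kτ * h ^ 5) * (Cβ * h ^ 5) / (A / 2 * h ^ 4 * (A / 2 * h ^ 4))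
      = 4 * d0 * d1 * Cα * Kτ * Cβ / A ^ 2 * h ^ 2 := by
  field_simp; ring

set_option maxHeartbeats 1000000 in
/-- Combined accuracy at a critical point for the WENO3-Z_ES4 weights
(application of Lemma 3.1 with `p = 1`, `m = 5`, `n1 = 4`, `n2 = 5`):
the weight deviation is `O(h²)`. -/
theorem weno3_ZES4_weight_accuracy
    (d0 d1 Cα A b0 b1 : ℝ) (τ β0 β1 : ℝ → ℝ)
    (hd0 : 0 < d0) (hd1 : 0 < d1) (hsum : d0 + d1 = 1)
    (hCα : 0 < Cα) (hA : 0 < A)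
    (hpos : ∃ ε > 0, ∀ h ∈ Set.Ioo (0:ℝ) ε, 0 < τ h ∧ 0 < β0 h ∧ 0 < β1 h)
    (hτ : ∃ K > 0, ∃ ε > 0, ∀ h ∈ Set.Ioo (0:ℝ) ε, |τ h| ≤ K * h ^ 5)
    (hβ0 : ∃ K > 0, ∃ ε > 0, ∀ h ∈ Set.Ioo (0:ℝ) ε,
      |β0 h - (A * h ^ 4 + b0 * h ^ 5)| ≤ K * h ^ 6)
    (hβ1 : ∃ K > 0, ∃ ε > 0, ∀ h ∈ Set.Ioo (0:ℝ) ε,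
      |β1 h - (A * h ^ 4 + b1 * h ^ 5)| ≤ K * h ^ 6) :
    ∃ K > 0, ∃ ε > 0, ∀ h ∈ Set.Ioo (0:ℝ) ε,
      |d0 * (1 + Cα * τ h / β0 h) /
          (d0 * (1 + Cα * τ h / β0 h) + d1 * (1 + Cα * τ h / β1 h)) - d0| ≤ K * h ^ 2 ∧
      |d1 * (1 + Cα * τ h / β1 h) /
          (d0 * (1 + Cα * τ h / β0 h) + d1 * (1 + Cα * τ h / β1 h)) - d1| ≤ K * h ^ 2 := by
  obtain ⟨ε₀, hε₀, hp⟩ := hpos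
  obtain ⟨Kτ, hKτ, ε₁, hε₁, hτ'⟩ := hτ
  obtain ⟨K0, hK0, ε₂, hε₂, h0'⟩ := hβ0
  obtain ⟨K1, hK1, ε₃, hε₃, h1'⟩ := hβ1
  set Cβ := |b1 - b0| + K0 + K1 with hCβ
  have hCβpos : 0 < Cβ := by positivity
  set M := |b0| + |b1| + K0 + K1 + 1 with hM
  have hMpos : 0 < M := by positivity
  refine ⟨4 * d0 * d1 * Cα * Kτ * Cβ / A ^ 2, by positivity,
    min (min (min ε₀ ε₁) (min ε₂ ε₃)) (min 1 (A / (2 * M))), by positivity, ?_⟩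
  intro h hh
  obtain ⟨hh0, hhε⟩ := hh
  have hhε₀ : h < ε₀ := lt_of_lt_of_le hhε (le_trans (min_le_left _ _) (le_trans (min_le_left _ _) (min_le_left _ _)))
  have hhε₁ : h < ε₁ := lt_of_lt_of_le hhε (le_trans (min_le_left _ _) (le_trans (min_le_left _ _) (min_le_right _ _)))
  have hhε₂ : h < ε₂ := lt_of_lt_of_le hhε (le_trans (min_le_left _ _) (le_trans (min_le_right _ _) (min_le_left _ _)))
  have hhε₃ : h < ε₃ := lt_of_lt_of_le hhε (le_trans (min_le_left _ _) (le_trans (min_le_right _ _) (min_le_right _ _)))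
  have hh1 : h ≤ 1 := le_of_lt (lt_of_lt_of_le hhε (le_trans (min_le_right _ _) (min_le_left _ _)))
  have hhM : h ≤ A / (2 * M) := le_of_lt (lt_of_lt_of_le hhε (le_trans (min_le_right _ _) (min_le_right _ _)))
  obtain ⟨htpos, hB0pos, hB1pos⟩ := hp h ⟨hh0, hhε₀⟩
  have hτh := hτ' h ⟨hh0, hhε₁⟩
  have h0h := h0' h ⟨hh0, hhε₂⟩
  have h1h := h1' h ⟨hh0, hhε₃⟩
  set t := τ h
  set B0 := β0 h
  set B1 := β1 h
  clear_value t B0 B1 Cβ M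
  -- lower bounds for B0, B1
  have hMA : M * h ≤ A / 2 := by
    calc M * h ≤ M * (A / (2 * M)) := by gcongr
      _ = A / 2 := by field_simp
  have h6le5 : h ^ 6 ≤ h ^ 5 := by nlinarith [pow_pos hh0 5]
  have hMh5 : M * h ^ 5 ≤ A / 2 * h ^ 4 := by
    have := mul_le_mul_of_nonneg_right hMA (pow_pos hh0 4).le
    nlinarith
  have h5a : |b0| * h ^ 5 + K0 * h ^ 5 ≤ M * h ^ 5 := by
    rw [hM]
    nlinarith [mul_nonneg (abs_nonneg b1) (pow_pos hh0 5).le,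
      mul_nonneg hK1.le (pow_pos hh0 5).le, (pow_pos hh0 5).le]
  have h5b : |b1| * h ^ 5 + K1 * h ^ 5 ≤ M * h ^ 5 := by
    rw [hM]
    nlinarith [mul_nonneg (abs_nonneg b0) (pow_pos hh0 5).le,
      mul_nonneg hK0.le (pow_pos hh0 5).le, (pow_pos hh0 5).le]
  have hB0lb : A / 2 * h ^ 4 ≤ B0 := by
    have h2 := (abs_le.mp h0h).1
    have h3 := mul_le_mul_of_nonneg_right (neg_abs_le b0) (pow_pos hh0 5).le
    have h4 : K0 * h ^ 6 ≤ K0 * h ^ 5 := mul_le_mul_of_nonneg_left h6le5 hK0.le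
    linarith
  have hB1lb : A / 2 * h ^ 4 ≤ B1 := by
    have h2 := (abs_le.mp h1h).1
    have h3 := mul_le_mul_of_nonneg_right (neg_abs_le b1) (pow_pos hh0 5).le
    have h4 : K1 * h ^ 6 ≤ K1 * h ^ 5 := mul_le_mul_of_nonneg_left h6le5 hK1.le
    linarith
  -- difference bound
  have hdiff : |B1 - B0| ≤ Cβ * h ^ 5 := by
    have e : B1 - B0 = (B1 - (A * h ^ 4 + b1 * h ^ 5)) + (b1 - b0) * h ^ 5
        - (B0 - (A * h ^ 4 + b0 * h ^ 5)) := by ring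
    rw [e]
    have hab : |(b1 - b0) * h ^ 5| = |b1 - b0| * h ^ 5 := by
      rw [abs_mul, abs_of_pos (pow_pos hh0 5)]
    calc _ ≤ |(B1 - (A * h ^ 4 + b1 * h ^ 5)) + (b1 - b0) * h ^ 5|
            + |B0 - (A * h ^ 4 + b0 * h ^ 5)| := abs_sub _ _
      _ ≤ |B1 - (A * h ^ 4 + b1 * h ^ 5)| + |(b1 - b0) * h ^ 5|
            + |B0 - (A * h ^ 4 + b0 * h ^ 5)| := by gcongr; exact abs_add_le _ _
      _ ≤ K1 * h ^ 6 + |b1 - b0| * h ^ 5 + K0 * h ^ 6 := by rw [hab]; gcongr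
      _ ≤ Cβ * h ^ 5 := by rw [hCβ]; nlinarith
  have ht5 : t ≤ Kτ * h ^ 5 := le_trans (le_abs_self t) hτh
  -- main bound via the key lemma
  have hmain : d0 * d1 * Cα * t * |B1 - B0| / (B0 * B1)
      ≤ 4 * d0 * d1 * Cα * Kτ * Cβ / A ^ 2 * h ^ 2 := by
    have hden : A / 2 * h ^ 4 * (A / 2 * h ^ 4) ≤ B0 * B1 := by
      have := mul_le_mul hB0lb hB1lb (by positivity) (le_trans (by positivity) hB0lb)
      nlinarith [pow_pos hh0 4]
    have hnum : d0 * d1 * Cα * t * |B1 - B0|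
        ≤ d0 * d1 * Cα * (Kτ * h ^ 5) * (Cβ * h ^ 5) := by
      gcongr
    calc d0 * d1 * Cα * t * |B1 - B0| / (B0 * B1)
        ≤ d0 * d1 * Cα * (Kτ * h ^ 5) * (Cβ * h ^ 5) / (A / 2 * h ^ 4 * (A / 2 * h ^ 4)) := by
          exact div_le_div₀ (by positivity) hnum (by positivity) hden
      _ = 4 * d0 * d1 * Cα * Kτ * Cβ / A ^ 2 * h ^ 2 := by
          exact weno_aux d0 d1 Cα Kτ Cβ A h hA.ne' hh0.ne'
  constructor
  · exact (weno_key d0 d1 Cα t B0 B1 hd0 hd1 hsum hCα htpos hB0pos hB1pos).trans hmain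
  · rw [add_comm (d0 * (1 + Cα * t / B0))]
    have := weno_key d1 d0 Cα t B1 B0 hd1 hd0 (by linarith) hCα htpos hB1pos hB0pos
    refine this.trans (le_trans (le_of_eq ?_) hmain)
    rw [abs_sub_comm B0 B1]
    ring
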